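/- Let Ω = (a₁,b₁)×(a₂,b₂) ⊂ ℝ² with b_i > a_i > 0, let n be a positive integer, and let ε > 0. Then there exists H such that for all h ≥ H, for every pair of integers (j₁,j₂) with the closed rectangle (αʰ)⁻¹([j₁,j₁+1]×[j₂,j₂+1]) contained in Ω, and every (k₁,k₂) ∈ {0,…,n−1}², one has |λ(Ωʰⱼₖ)/λ(Ωʰⱼ) − 1/n²| < ε, where Ωʰⱼ and Ωʰⱼₖ are the preimages under αʰ(x₁,x₂)=(hx₁,hx₂|x₂|) of the unit square [j₁,j₁+1]×[j₂,j₂+1] and its subsquare [j₁+k₁/n,j₁+(k₁+1)/n]×[j₂+k₂/n,j₂+(k₂+1)/n] respectively (i.e., the sequence {αʰ} is asymptotically uniformly distributed on Ω). -/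

import Mathlib

open MeasureTheory Set

noncomputable def alphaMap (h : ℝ) (x : ℝ × ℝ) : ℝ × ℝ :=
  (h * x.1, h * x.2 * |x.2|)

lemma exists_mul_abs (t : ℝ) : ∃ x : ℝ, x * |x| = t := by
  rcases le_or_gt 0 t with ht | ht
  · exact ⟨Real.sqrt t, by
      rw [abs_of_nonneg (Real.sqrt_nonneg t), Real.mul_self_sqrt ht]⟩
  · refine ⟨-Real.sqrt (-t), ?_⟩
    rw [abs_neg, abs_of_nonneg (Real.sqrt_nonneg _), neg_mul,
      Real.mul_self_sqrt (by linarith)]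
    ring

lemma sq_preimage {h c : ℝ} (d : ℝ) (hh : 0 < h) (hc : 0 < c) :
    (fun x : ℝ => h * x * |x|) ⁻¹' Icc c d
      = Icc (Real.sqrt (c / h)) (Real.sqrt (d / h)) := by
  ext x
  simp only [mem_preimage, mem_Icc]
  constructor
  · rintro ⟨h1, h2⟩
    have hx : 0 < x := by
      rcases le_or_gt x 0 with hx | hx
      · exfalso
        have hxa : x * |x| ≤ 0 := mul_nonpos_of_nonpos_of_nonneg hx (abs_nonneg x)
        nlinarith
      · exact hx
    rw [abs_of_pos hx] at h1 h2
    constructor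
    · have hcx : c / h ≤ x * x := by rw [div_le_iff₀ hh]; nlinarith
      calc Real.sqrt (c / h) ≤ Real.sqrt (x * x) := Real.sqrt_le_sqrt hcx
        _ = x := Real.sqrt_mul_self hx.le
    · have hxd : x * x ≤ d / h := by rw [le_div_iff₀ hh]; nlinarith
      calc x = Real.sqrt (x * x) := (Real.sqrt_mul_self hx.le).symm
        _ ≤ Real.sqrt (d / h) := Real.sqrt_le_sqrt hxd
  · rintro ⟨h1, h2⟩
    have hch : 0 < c / h := div_pos hc hh
    have hx : 0 < x := lt_of_lt_of_le (Real.sqrt_pos.mpr hch) h1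
    have hdh : 0 ≤ d / h := (Real.sqrt_pos.mp (lt_of_lt_of_le hx h2)).le
    have e1 : c / h ≤ x * x := by
      have := mul_self_le_mul_self (Real.sqrt_nonneg (c / h)) h1
      rwa [Real.mul_self_sqrt hch.le] at this
    have e2 : x * x ≤ d / h := by
      have := mul_self_le_mul_self hx.le h2
      rwa [Real.mul_self_sqrt hdh] at this
    rw [div_le_iff₀ hh] at e1
    rw [le_div_iff₀ hh] at e2
    rw [abs_of_pos hx]
    exact ⟨by nlinarith, by nlinarith⟩

lemma lin_preimage {h : ℝ} (c d : ℝ) (hh : 0 < h) :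
    (fun x : ℝ => h * x) ⁻¹' Icc c d = Icc (c / h) (d / h) := by
  ext x
  simp only [mem_preimage, mem_Icc, div_le_iff₀ hh, le_div_iff₀ hh]
  constructor <;> rintro ⟨u, v⟩ <;> constructor <;> nlinarith

lemma alpha_preimage {h c₂ : ℝ} (c₁ d₁ d₂ : ℝ) (hh : 0 < h) (hc₂ : 0 < c₂) :
    alphaMap h ⁻¹' Icc (c₁, c₂) (d₁, d₂)
      = Icc (c₁ / h) (d₁ / h) ×ˢ Icc (Real.sqrt (c₂ / h)) (Real.sqrt (d₂ / h)) := by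
  ext ⟨x, y⟩
  have e1 : x ∈ Icc (c₁ / h) (d₁ / h) ↔ c₁ ≤ h * x ∧ h * x ≤ d₁ := by
    rw [← lin_preimage c₁ d₁ hh]; simp [mem_Icc]
  have e2 : y ∈ Icc (Real.sqrt (c₂ / h)) (Real.sqrt (d₂ / h))
      ↔ c₂ ≤ h * y * |y| ∧ h * y * |y| ≤ d₂ := by
    rw [← sq_preimage d₂ hh hc₂]; simp [mem_Icc]
  simp only [mem_preimage, alphaMap, mem_Icc, Prod.mk_le_mk, mem_prod] at *
  tauto

lemma vol_toReal {h c₂ : ℝ} (c₁ d₁ d₂ : ℝ) (hh : 0 < h) (hc₂ : 0 < c₂)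
    (h₁ : c₁ ≤ d₁) (h₂ : c₂ ≤ d₂) :
    (volume (alphaMap h ⁻¹' Icc (c₁, c₂) (d₁, d₂))).toReal
      = ((d₁ - c₁) / h) * ((Real.sqrt d₂ - Real.sqrt c₂) / Real.sqrt h) := by
  rw [alpha_preimage c₁ d₁ d₂ hh hc₂, Measure.volume_eq_prod, Measure.prod_prod,
    Real.volume_Icc, Real.volume_Icc, ENNReal.toReal_mul, ENNReal.toReal_ofReal,
    ENNReal.toReal_ofReal, Real.sqrt_div hc₂.le, Real.sqrt_div (le_trans hc₂.le h₂)]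
  · ring
  · exact sub_nonneg.2 (Real.sqrt_le_sqrt ((div_le_div_iff_of_pos_right hh).mpr h₂))
  · exact sub_nonneg.2 ((div_le_div_iff_of_pos_right hh).mpr h₁)


private lemma final_est {e nn jr sj s1 ss ss1 : ℝ} (he : 0 < e)
    (hnn1 : 1 ≤ nn) (hj1 : 1 ≤ jr) (hje : 1 / (4 * e) < jr)
    (hsj1 : 1 ≤ sj) (hs1sj : sj ≤ s1)
    (hss_ge : sj ≤ ss) (hss1_ge : sj ≤ ss1) (hss_le : ss ≤ s1) (hss1_le : ss1 ≤ s1)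
    (hsjsq : sj * sj = jr) (hs1sq : s1 * s1 = jr + 1) :
    |(s1 + sj) - (ss1 + ss)| < e * (nn ^ 2 * (ss1 + ss)) := by
  have hQ : (0:ℝ) < ss1 + ss := by linarith
  have hnum : |(s1 + sj) - (ss1 + ss)| ≤ s1 - sj := abs_le.2 ⟨by linarith, by linarith⟩
  have h4e : 1 < jr * (4 * e) := (div_lt_iff₀ (by positivity)).1 hje
  have hesq : (0:ℝ) ≤ e ^ 2 * jr := by positivity
  have hcc : ((1 + 2 * e) * sj) * ((1 + 2 * e) * sj) = jr + 4 * (jr * e) + 4 * (e ^ 2 * jr) := by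
    linear_combination (1 + 4 * e + 4 * e ^ 2) * hsjsq
  have hsq : s1 * s1 < ((1 + 2 * e) * sj) * ((1 + 2 * e) * sj) := by
    rw [hs1sq, hcc]; linarith
  have hc0 : (0:ℝ) < (1 + 2 * e) * sj := mul_pos (by linarith) (by linarith)
  have hstep : s1 < (1 + 2 * e) * sj := by nlinarith [hsq, hc0, hs1sj, hsj1]
  have e1 : (0:ℝ) ≤ (nn ^ 2 - 1) * (ss1 + ss) := mul_nonneg (by nlinarith [hnn1]) hQ.le
  have e2 : 2 * sj ≤ nn ^ 2 * (ss1 + ss) := by nlinarith [e1]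
  have e3 : e * (2 * sj) ≤ e * (nn ^ 2 * (ss1 + ss)) := mul_le_mul_of_nonneg_left e2 he.le
  calc |(s1 + sj) - (ss1 + ss)| ≤ s1 - sj := hnum
    _ < 2 * e * sj := by linarith
    _ ≤ e * (nn ^ 2 * (ss1 + ss)) := by linarith

set_option maxHeartbeats 1000000 in
theorem stmt_8 (a₁ b₁ a₂ b₂ : ℝ) (ha₁ : 0 < a₁) (hb₁ : a₁ < b₁)
    (ha₂ : 0 < a₂) (hb₂ : a₂ < b₂) (n : ℕ) (hn : 0 < n) (ε : ℝ) (hε : 0 < ε) :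
    ∃ H : ℕ, ∀ h : ℕ, H ≤ h → ∀ j₁ j₂ : ℤ,
      alphaMap h ⁻¹' Set.Icc ((j₁ : ℝ), (j₂ : ℝ)) ((j₁ : ℝ) + 1, (j₂ : ℝ) + 1) ⊆
          Set.Ioo a₁ b₁ ×ˢ Set.Ioo a₂ b₂ →
      ∀ k₁ k₂ : ℕ, k₁ ≤ n - 1 → k₂ ≤ n - 1 →
        |(volume (alphaMap h ⁻¹'
              Set.Icc ((j₁ : ℝ) + (k₁ : ℝ) / n, (j₂ : ℝ) + (k₂ : ℝ) / n)
                ((j₁ : ℝ) + ((k₁ : ℝ) + 1) / n, (j₂ : ℝ) + ((k₂ : ℝ) + 1) / n))).toReal /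
            (volume (alphaMap h ⁻¹'
              Set.Icc ((j₁ : ℝ), (j₂ : ℝ)) ((j₁ : ℝ) + 1, (j₂ : ℝ) + 1))).toReal
          - 1 / (n : ℝ) ^ 2| < ε := by
  have ha₂sq : (0:ℝ) < a₂ ^ 2 := by positivity
  refine ⟨⌈(1 / (4 * ε) + 2) / a₂ ^ 2⌉₊ + 1, ?_⟩
  intro h hH j₁ j₂ hsub k₁ k₂ hk₁ hk₂
  have hh1 : (1:ℝ) ≤ (h:ℝ) := by
    have : 1 ≤ h := le_trans (Nat.le_add_left 1 _) hH
    exact_mod_cast this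
  have hh0 : (0:ℝ) < (h:ℝ) := by linarith
  have hHr : (1 / (4 * ε) + 2) / a₂ ^ 2 ≤ (h:ℝ) := by
    have h1 : ((⌈(1 / (4 * ε) + 2) / a₂ ^ 2⌉₊ + 1 : ℕ) : ℝ) ≤ (h:ℝ) := by exact_mod_cast hH
    have h2 := Nat.le_ceil ((1 / (4 * ε) + 2) / a₂ ^ 2)
    push_cast at h1
    linarith
  have hha : 1 / (4 * ε) + 2 ≤ (h:ℝ) * a₂ ^ 2 := by
    rw [div_le_iff₀ ha₂sq] at hHr
    linarith
  -- produce a point of the preimage of the big square to locate j₂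
  obtain ⟨x₂, hx₂⟩ := exists_mul_abs (((j₂:ℝ) + 1/2) / h)
  have hax : (h:ℝ) * x₂ * |x₂| = (j₂:ℝ) + 1/2 := by
    rw [mul_assoc, hx₂]; field_simp
  have hax1 : (h:ℝ) * (((j₁:ℝ) + 1/2) / h) = (j₁:ℝ) + 1/2 := by field_simp
  have hmem : ((((j₁:ℝ) + 1/2) / h), x₂) ∈
      alphaMap h ⁻¹' Set.Icc ((j₁ : ℝ), (j₂ : ℝ)) ((j₁ : ℝ) + 1, (j₂ : ℝ) + 1) := by
    simp only [mem_preimage, alphaMap, mem_Icc, Prod.mk_le_mk]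
    rw [hax1, hax]
    refine ⟨⟨by linarith, by linarith⟩, by linarith, by linarith⟩
  have hx2 := hsub hmem
  rw [mem_prod] at hx2
  have ha₂x : a₂ < x₂ := hx2.2.1
  have hx2pos : 0 < x₂ := lt_trans ha₂ ha₂x
  have hkey : (h:ℝ) * a₂ ^ 2 < (j₂:ℝ) + 1/2 := by
    rw [abs_of_pos hx2pos] at hax
    have hxx : a₂ ^ 2 < x₂ * x₂ := by
      rw [sq]; exact mul_self_lt_mul_self ha₂.le ha₂x
    calc (h:ℝ) * a₂ ^ 2 < (h:ℝ) * (x₂ * x₂) := mul_lt_mul_of_pos_left hxx hh0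
      _ = (j₂:ℝ) + 1/2 := by rw [← hax]; ring
  have hjε : 1 / (4 * ε) < (j₂:ℝ) := by linarith
  have hj1 : (1:ℝ) ≤ (j₂:ℝ) := by
    have : (0:ℝ) < 1 / (4 * ε) := by positivity
    linarith
  -- abbreviations
  set nn : ℝ := (n : ℝ) with hnndef
  have hnn0 : (0:ℝ) < nn := by rw [hnndef]; exact_mod_cast hn
  have hnn1 : (1:ℝ) ≤ nn := by rw [hnndef]; exact_mod_cast hn
  set jr : ℝ := (j₂ : ℝ) with hjrdef
  have hk₂n : (k₂:ℝ) + 1 ≤ nn := by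
    have : k₂ + 1 ≤ n := by omega
    rw [hnndef]
    exact_mod_cast this
  have hk₂0 : (0:ℝ) ≤ (k₂:ℝ) := Nat.cast_nonneg _
  have hdivpos : (0:ℝ) ≤ (k₂:ℝ) / nn := by positivity
  have hdiv1pos : (0:ℝ) ≤ ((k₂:ℝ) + 1) / nn := by positivity
  have hdiv1le : ((k₂:ℝ) + 1) / nn ≤ 1 := (div_le_one hnn0).2 hk₂n
  have hdivle : (k₂:ℝ) / nn ≤ 1 := (div_le_one hnn0).2 (by linarith)
  set sj : ℝ := Real.sqrt jr with hsjdef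
  set s1 : ℝ := Real.sqrt (jr + 1) with hs1def
  set ss : ℝ := Real.sqrt (jr + (k₂:ℝ) / nn) with hssdef
  set ss1 : ℝ := Real.sqrt (jr + ((k₂:ℝ) + 1) / nn) with hss1def
  have hsj1 : (1:ℝ) ≤ sj := by
    have := Real.sqrt_le_sqrt hj1
    rwa [Real.sqrt_one] at this
  have hs1sj : sj ≤ s1 := Real.sqrt_le_sqrt (by linarith)
  have hss_ge : sj ≤ ss := Real.sqrt_le_sqrt (by linarith)
  have hss1_ge : sj ≤ ss1 := Real.sqrt_le_sqrt (by linarith)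
  have hss_le : ss ≤ s1 := Real.sqrt_le_sqrt (by linarith)
  have hss1_le : ss1 ≤ s1 := Real.sqrt_le_sqrt (by linarith)
  have hsjsq : sj * sj = jr := Real.mul_self_sqrt (by linarith)
  have hs1sq : s1 * s1 = jr + 1 := Real.mul_self_sqrt (by linarith)
  have hsssq : ss * ss = jr + (k₂:ℝ) / nn := Real.mul_self_sqrt (by linarith)
  have hss1sq : ss1 * ss1 = jr + ((k₂:ℝ) + 1) / nn := Real.mul_self_sqrt (by linarith)
  have hP : (0:ℝ) < s1 + sj := by linarith
  have hQ : (0:ℝ) < ss1 + ss := by linarith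
  -- volume computations
  have hbig : (volume (alphaMap (h:ℝ) ⁻¹' Set.Icc ((j₁:ℝ), jr) ((j₁:ℝ) + 1, jr + 1))).toReal
      = (1 / (h:ℝ)) * ((s1 - sj) / Real.sqrt (h:ℝ)) := by
    rw [vol_toReal ((j₁:ℝ)) ((j₁:ℝ) + 1) (jr + 1) hh0 (by linarith) (by linarith) (by linarith)]
    rw [← hs1def, ← hsjdef]
    ring
  have hsmall : (volume (alphaMap (h:ℝ) ⁻¹'
        Set.Icc ((j₁:ℝ) + (k₁:ℝ) / nn, jr + (k₂:ℝ) / nn)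
          ((j₁:ℝ) + ((k₁:ℝ) + 1) / nn, jr + ((k₂:ℝ) + 1) / nn))).toReal
      = ((1 / nn) / (h:ℝ)) * ((ss1 - ss) / Real.sqrt (h:ℝ)) := by
    rw [vol_toReal ((j₁:ℝ) + (k₁:ℝ) / nn) ((j₁:ℝ) + ((k₁:ℝ) + 1) / nn)
      (jr + ((k₂:ℝ) + 1) / nn) hh0 (by linarith)
      (by
        have : (k₁:ℝ) / nn ≤ ((k₁:ℝ) + 1) / nn := by gcongr; linarith
        linarith)
      (by
        have : (k₂:ℝ) / nn ≤ ((k₂:ℝ) + 1) / nn := by gcongr; linarith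
        linarith)]
    rw [← hss1def, ← hssdef]
    have hnne : nn ≠ 0 := ne_of_gt hnn0
    field_simp
    ring
  rw [hsmall, hbig]
  -- nonzero facts
  have hsqh : (0:ℝ) < Real.sqrt (h:ℝ) := Real.sqrt_pos.2 hh0
  have hA : s1 - sj = 1 / (s1 + sj) := by
    rw [eq_div_iff (ne_of_gt hP)]
    linear_combination hs1sq - hsjsq
  have hdiffsq : ss1 * ss1 - ss * ss = 1 / nn := by
    rw [hss1sq, hsssq]
    have hnne : nn ≠ 0 := ne_of_gt hnn0
    field_simp
    ring
  have hB : ss1 - ss = (1 / nn) / (ss1 + ss) := by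
    rw [eq_div_iff (ne_of_gt hQ)]
    linear_combination hdiffsq
  have hratio : (((1 / nn) / (h:ℝ)) * ((ss1 - ss) / Real.sqrt (h:ℝ))) /
      ((1 / (h:ℝ)) * ((s1 - sj) / Real.sqrt (h:ℝ)))
      = (s1 + sj) / (nn ^ 2 * (ss1 + ss)) := by
    rw [hA, hB]
    have h1 : (h:ℝ) ≠ 0 := ne_of_gt hh0
    have h2 : Real.sqrt (h:ℝ) ≠ 0 := ne_of_gt hsqh
    have h3 : nn ≠ 0 := ne_of_gt hnn0
    have h4 : s1 + sj ≠ 0 := ne_of_gt hP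
    have h5 : ss1 + ss ≠ 0 := ne_of_gt hQ
    field_simp
  rw [hratio]
  have hdpos : (0:ℝ) < nn ^ 2 * (ss1 + ss) := by positivity
  have hrw : (s1 + sj) / (nn ^ 2 * (ss1 + ss)) - 1 / nn ^ 2
      = ((s1 + sj) - (ss1 + ss)) / (nn ^ 2 * (ss1 + ss)) := by
    field_simp
  rw [hrw, abs_div, abs_of_pos hdpos, div_lt_iff₀ hdpos]
  exact final_est hε hnn1 hj1 hjε hsj1 hs1sj hss_ge hss1_ge hss_le hss1_le hsjsq hs1sq
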